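/- Let E be the energy pairing of two continuous semipositive metrics φ₁, φ₂ on a line bundle L over an n-dimensional reduced proper scheme X over a non-Archimedean field, defined by E(L,φ₁,φ₂) = (1/(n+1)) Σ_{j=0}^n ∫ (φ₁−φ₂) (dd^c φ₁)^j ∧ (dd^c φ₂)^{n−j}. Then E satisfies the cocycle rule: E(L,φ₁,φ₂) + E(L,φ₂,φ₃) + E(L,φ₃,φ₁) = 0 for any three continuous semipositive metrics φ₁, φ₂, φ₃ on L. -/

import Mathlib

open MeasureTheory
open Finset

/-- Auxiliary triangular-sum identity. -/
lemma tri_sum (g : ℕ → ℕ → ℝ) (n : ℕ) :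
    ∑ j ∈ range (n+1), ∑ q ∈ range (n-j), (g (j+1) q - g j (q+1))
      = ∑ j ∈ range (n+1), (g j 0 - g 0 j) := by
  induction n with
  | zero => simp
  | succ n ih =>
    have h1 : ∀ j ∈ range (n+1), ∑ q ∈ range (n+1-j), (g (j+1) q - g j (q+1))
        = (∑ q ∈ range (n-j), (g (j+1) q - g j (q+1))) + (g (j+1) (n-j) - g j (n-j+1)) := by
      intro j hj
      have : n + 1 - j = (n - j) + 1 := by
        have := mem_range.mp hj; omega
      rw [this, sum_range_succ]
    have h2 : ∑ j ∈ range (n+1), (g (j+1) (n-j) - g j (n-j+1))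
        = g (n+1) 0 - g 0 (n+1) := by
      have h3 : ∀ j ∈ range (n+1), g (j+1) (n-j) - g j (n-j+1)
          = (fun k => g k (n+1-k)) (j+1) - (fun k => g k (n+1-k)) j := by
        intro j hj
        have := mem_range.mp hj
        simp only
        congr 2 <;> omega
      rw [sum_congr rfl h3, sum_range_sub (fun k => g k (n+1-k))]
      simp
    rw [sum_range_succ (fun j => ∑ q ∈ range (n+1-j), (g (j+1) q - g j (q+1))),
      sum_congr rfl h1, sum_add_distrib, h2, ih,
      sum_range_succ (fun j => g j 0 - g 0 j)]
    simp [sum_range_succ, sum_sub_distrib]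
    ring

/-- The tuple with `p` copies of `a`, then `q` copies of `b`, then copies of `c`. -/
def trip {M : Type} (a b c : M) {n : ℕ} (p q : ℕ) (i : Fin n) : M :=
  if (i : ℕ) < p then a else if (i : ℕ) < p + q then b else c


/-- **Cocycle rule for the energy** (Proposition 2.18(c)).
Abstract setting: `Xan` is the (compact) Berkovich analytification of an
`n`-dimensional reduced proper scheme `X`, `M` is the collection of continuous
semipositive metrics on a line bundle `L` on `X`, `φdiff φ ψ` is the continuous
function `φ − ψ` on `Xan` (so it satisfies the cocycle rule), and
`μ v = dd^cv₁ ∧ ⋯ ∧ dd^cv_n` are the mixed Chambert-Loir (Monge–Ampère)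
measures: positive Radon measures, symmetric in the metrics, and satisfying the
integration-by-parts symmetry `∫ f dd^c g ∧ T = ∫ g dd^c f ∧ T` (here stated in
polarized form `hparts`).  The energy is
`E(φ,ψ) = (1/(n+1)) Σ_{j=0}^n ∫ (φ−ψ) (dd^cφ)^j ∧ (dd^cψ)^{n−j}`.
Then `E(φ₁,φ₂) + E(φ₂,φ₃) + E(φ₃,φ₁) = 0` for any three continuous semipositive
metrics `φ₁, φ₂, φ₃` on `L`. -/
theorem stmt8 {Xan M : Type} [TopologicalSpace Xan] [CompactSpace Xan]
    [MeasurableSpace Xan] [BorelSpace Xan]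
    (n : ℕ)
    (φdiff : M → M → C(Xan, ℝ))
    (hcocycle : ∀ a b c : M, φdiff a b + φdiff b c = φdiff a c)
    (μ : (Fin n → M) → Measure Xan)
    (hfin : ∀ v, IsFiniteMeasure (μ v))
    (hsymm : ∀ (v : Fin n → M) (σ : Equiv.Perm (Fin n)), μ (v ∘ σ) = μ v)
    (hparts : ∀ (i : Fin n) (u₁ u₂ v₁ v₂ : M) (w : Fin n → M),
      ((∫ x, φdiff u₁ u₂ x ∂ μ (Function.update w i v₁)) -
        ∫ x, φdiff u₁ u₂ x ∂ μ (Function.update w i v₂)) =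
      ((∫ x, φdiff v₁ v₂ x ∂ μ (Function.update w i u₁)) -
        ∫ x, φdiff v₁ v₂ x ∂ μ (Function.update w i u₂)))
    (E : M → M → ℝ)
    (hE : ∀ φ ψ : M, E φ ψ = (1 / (n + 1 : ℝ)) *
      ∑ j ∈ Finset.range (n + 1),
        ∫ x, φdiff φ ψ x ∂ μ (fun i => if (i : ℕ) < j then φ else ψ))
    (φ₁ φ₂ φ₃ : M) :
    E φ₁ φ₂ + E φ₂ φ₃ + E φ₃ φ₁ = 0 := by
  -- basic consequences of the cocycle rule for φdiff
  have hf0 : ∀ a : M, φdiff a a = 0 := by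
    intro a
    have h := hcocycle a a a
    exact add_eq_left.mp h
  have hanti : ∀ a b : M, φdiff b a = -φdiff a b := by
    intro a b
    have h := hcocycle b a b
    rw [hf0 b] at h
    exact eq_neg_of_add_eq_zero_left h
  -- integrability
  have hint : ∀ (a b : M) (v : Fin n → M),
      Integrable (fun x => φdiff a b x) (μ v) := by
    intro a b v
    haveI := hfin v
    exact (φdiff a b).continuous.integrable_of_hasCompactSupport
      (HasCompactSupport.of_compactSpace _)
  -- abbreviations
  set t : ℕ → ℕ → Fin n → M := fun p q => trip φ₁ φ₂ φ₃ p q with ht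
  set Iab : ℕ → ℕ → ℝ := fun p q => ∫ x, φdiff φ₁ φ₂ x ∂ μ (t p q) with hIab
  set Ibc : ℕ → ℕ → ℝ := fun p q => ∫ x, φdiff φ₂ φ₃ x ∂ μ (t p q) with hIbc
  -- the integration-by-parts step
  have key : ∀ p q : ℕ, p + q < n →
      Iab p (q+1) - Iab p q = Ibc (p+1) q - Ibc p (q+1) := by
    intro p q hpq
    set i : Fin n := ⟨p + q, hpq⟩ with hi
    have e1 : Function.update (t p q) i φ₃ = t p q := by
      funext k
      rcases eq_or_ne k i with rfl | hk
      · rw [Function.update_self]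
        show _ = trip φ₁ φ₂ φ₃ p q i
        rw [trip, if_neg (by simp [hi]; try omega), if_neg (by simp [hi])]
      · rw [Function.update_of_ne hk]
    have e2 : Function.update (t p q) i φ₂ = t p (q+1) := by
      funext k
      rcases eq_or_ne k i with rfl | hk
      · rw [Function.update_self]
        show _ = trip φ₁ φ₂ φ₃ p (q+1) i
        rw [trip, if_neg (by simp [hi]; try omega), if_pos (by simp [hi]; try omega)]
      · rw [Function.update_of_ne hk]
        have hkv : (k : ℕ) ≠ p + q := fun h => hk (Fin.ext h)
        show trip φ₁ φ₂ φ₃ p q k = trip φ₁ φ₂ φ₃ p (q+1) k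
        rw [trip, trip]
        split_ifs <;> first | rfl | omega
    have e3 : μ (Function.update (t p q) i φ₁) = μ (t (p+1) q) := by
      have hp : p < n := by omega
      have heq : Function.update (t p q) i φ₁
          = t (p+1) q ∘ (Equiv.swap (⟨p, hp⟩ : Fin n) i) := by
        funext k
        rcases eq_or_ne k i with rfl | hk
        · rw [Function.update_self, Function.comp_apply, Equiv.swap_apply_right]
          show _ = trip φ₁ φ₂ φ₃ (p+1) q ⟨p, hp⟩
          rw [trip, if_pos (by simp; try omega)]
        · rw [Function.update_of_ne hk, Function.comp_apply]
          have hkv : (k : ℕ) ≠ p + q := fun h => hk (Fin.ext h)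
          rcases eq_or_ne k ⟨p, hp⟩ with rfl | hk2
          · rw [Equiv.swap_apply_left]
            show trip φ₁ φ₂ φ₃ p q _ = trip φ₁ φ₂ φ₃ (p+1) q i
            have hkv' : (p : ℕ) ≠ p + q := by simpa using hkv
            rw [trip, trip, if_neg (by simp), if_pos (by simp; try omega),
              if_neg (by simp [hi]; try omega), if_pos (by simp [hi]; try omega)]
          · rw [Equiv.swap_apply_of_ne_of_ne hk2 hk]
            have hkv2 : (k : ℕ) ≠ p := fun h => hk2 (Fin.ext h)
            show trip φ₁ φ₂ φ₃ p q k = trip φ₁ φ₂ φ₃ (p+1) q k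
            rw [trip, trip]
            split_ifs <;> first | rfl | omega
      rw [heq, hsymm]
    have star := hparts i φ₁ φ₂ φ₃ φ₂ (t p q)
    rw [e1, e2, e3] at star
    have hcb : ∀ ν : Measure Xan, (∫ x, φdiff φ₃ φ₂ x ∂ν) = -∫ x, φdiff φ₂ φ₃ x ∂ν := by
      intro ν
      rw [hanti φ₂ φ₃]
      simp [integral_neg]
    rw [hcb, hcb] at star
    simp only [hIab, hIbc]
    linarith [star]
  -- identify the three families of measures appearing in the energies
  have m1 : ∀ j ∈ range (n+1),
      (∫ x, φdiff φ₁ φ₂ x ∂ μ (fun i : Fin n => if (i : ℕ) < j then φ₁ else φ₂))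
        = Iab j (n - j) := by
    intro j hj
    have hj' := mem_range.mp hj
    have : (fun i : Fin n => if (i : ℕ) < j then φ₁ else φ₂) = t j (n - j) := by
      funext i
      show _ = trip φ₁ φ₂ φ₃ j (n-j) i
      have hi := i.isLt
      rw [trip]
      split_ifs <;> first | rfl | omega
    rw [this]
  have m2 : ∀ j ∈ range (n+1),
      (∫ x, φdiff φ₂ φ₃ x ∂ μ (fun i : Fin n => if (i : ℕ) < j then φ₂ else φ₃))
        = Ibc 0 j := by
    intro j hj
    have : (fun i : Fin n => if (i : ℕ) < j then φ₂ else φ₃) = t 0 j := by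
      funext i
      show _ = trip φ₁ φ₂ φ₃ 0 j i
      rw [trip]
      split_ifs <;> first | rfl | omega
    rw [this]
  have m3 : ∀ j ∈ range (n+1),
      (∫ x, φdiff φ₃ φ₁ x ∂ μ (fun i : Fin n => if (i : ℕ) < j then φ₃ else φ₁))
        = -(Iab (n - j) 0) - Ibc (n - j) 0 := by
    intro j hj
    have hj' := mem_range.mp hj
    have hμ : μ (fun i : Fin n => if (i : ℕ) < j then φ₃ else φ₁) = μ (t (n - j) 0) := by
      have heq : (fun i : Fin n => if (i : ℕ) < j then φ₃ else φ₁)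
          = t (n - j) 0 ∘ (Fin.revPerm : Equiv.Perm (Fin n)) := by
        funext i
        rw [Function.comp_apply]
        show _ = trip φ₁ φ₂ φ₃ (n-j) 0 (Fin.revPerm i)
        have hrev : ((Fin.revPerm i : Fin n) : ℕ) = n - 1 - (i : ℕ) := by
          simp [Fin.revPerm, Fin.rev]
          omega
        have hi := i.isLt
        rw [trip, hrev]
        split_ifs <;> first | rfl | omega
      rw [heq, hsymm]
    rw [hμ]
    -- pointwise, φdiff φ₃ φ₁ = -(φdiff φ₁ φ₂) - φdiff φ₂ φ₃
    have hca : φdiff φ₃ φ₁ = -(φdiff φ₁ φ₂) - φdiff φ₂ φ₃ := by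
      rw [hanti φ₁ φ₃, ← hcocycle φ₁ φ₂ φ₃]
      abel
    rw [hca]
    have hi1 := hint φ₁ φ₂ (t (n-j) 0)
    have hi2 := hint φ₂ φ₃ (t (n-j) 0)
    simp only [ContinuousMap.sub_apply, ContinuousMap.neg_apply]
    have hpt : ∀ x : Xan, -(φdiff φ₁ φ₂) x - (φdiff φ₂ φ₃) x
        = -((φdiff φ₁ φ₂) x + (φdiff φ₂ φ₃) x) := by intro x; ring
    simp_rw [hpt]
    rw [integral_neg, integral_add hi1 hi2]
    simp only [hIab, hIbc]
    ring
  -- rewrite the goal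
  rw [hE φ₁ φ₂, hE φ₂ φ₃, hE φ₃ φ₁, sum_congr rfl m1, sum_congr rfl m2, sum_congr rfl m3]
  -- reflect the third sum
  have hrefl1 : ∑ j ∈ range (n+1), (-(Iab (n - j) 0) - Ibc (n - j) 0)
      = ∑ j ∈ range (n+1), (-(Iab j 0) - Ibc j 0) := by
    have := sum_range_reflect (fun j => -(Iab j 0) - Ibc j 0) (n+1)
    simpa using this
  rw [hrefl1]
  -- main identity
  have main : ∑ j ∈ range (n+1), (Iab j (n-j) - Iab j 0)
      = ∑ j ∈ range (n+1), (Ibc j 0 - Ibc 0 j) := by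
    have perj : ∀ j ∈ range (n+1), Iab j (n-j) - Iab j 0
        = ∑ q ∈ range (n-j), (Ibc (j+1) q - Ibc j (q+1)) := by
      intro j hj
      have hj' := mem_range.mp hj
      rw [← sum_range_sub (fun q => Iab j q) (n-j)]
      refine sum_congr rfl fun q hq => ?_
      have hq' := mem_range.mp hq
      exact key j q (by omega)
    rw [sum_congr rfl perj, tri_sum (fun p q => Ibc p q) n]
  rw [sum_sub_distrib] at main
  rw [sum_sub_distrib] at main
  have expand : ∑ j ∈ range (n+1), (-(Iab j 0) - Ibc j 0)
      = -(∑ j ∈ range (n+1), Iab j 0) - ∑ j ∈ range (n+1), Ibc j 0 := by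
    rw [sum_sub_distrib]
    simp
  rw [expand]
  have hne : (n + 1 : ℝ) ≠ 0 := by positivity
  field_simp
  linarith [main]
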